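/- arXiv:2002.01967 — 2 statements merged into one kernel-verified Lean document; each statement's English description precedes it below -/
import Mathlib

section
/- Let R be a ring with an exhaustive increasing filtration 0 = F_{-1} ⊆ F_0 ⊆ F_1 ⊆ ⋯ with ⋃ F_n = R. If the associated graded ring gr R = ⊕_{n≥0} F_n/F_{n-1} is left Noetherian (as a graded ring, i.e. every graded left ideal is finitely generated), then R is left Noetherian. -/
/-- `filtPrev F n` is `F (n-1)`, with the convention `F (-1) = 0`. -/
def filtPrev {R : Type*} [Ring R] (F : ℕ → AddSubgroup R) : ℕ → AddSubgroup R
  | 0 => ⊥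
  | n + 1 => F n

/-- Let `R` be a ring with an exhaustive increasing filtration
`0 = F_{-1} ⊆ F_0 ⊆ F_1 ⊆ ⋯`, `⋃ F_n = R`, `F_m · F_n ⊆ F_{m+n}`.  If the associated graded
ring `gr R = ⊕_{n ≥ 0} F_n / F_{n-1}` (here given as an abstract graded ring `A` whose
graded pieces are identified with `F_n / F_{n-1}` compatibly with multiplication) is graded
left Noetherian — every homogeneous left ideal is finitely generated — then `R` is left
Noetherian. -/
theorem noetherian_of_graded_noetherian
    (R : Type*) [Ring R] (F : ℕ → AddSubgroup R)
    (hF_mono : Monotone F)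
    (hF_exhaustive : ∀ x : R, ∃ n, x ∈ F n)
    (hF_mul : ∀ m n : ℕ, ∀ x y : R, x ∈ F m → y ∈ F n → x * y ∈ F (m + n))
    (A : Type*) [Ring A] (𝒜 : ℕ → AddSubgroup A) [GradedRing 𝒜]
    (e : ∀ n : ℕ, (↥(F n) ⧸ (filtPrev F n).addSubgroupOf (F n)) ≃+ ↥(𝒜 n))
    (he_mul : ∀ (m n : ℕ) (x : ↥(F m)) (y : ↥(F n)),
      ((e (m + n) (QuotientAddGroup.mk
          (⟨(x : R) * (y : R), hF_mul m n x y x.2 y.2⟩ : ↥(F (m + n)))) : ↥(𝒜 (m + n))) : A) =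
        ((e m (QuotientAddGroup.mk x) : ↥(𝒜 m)) : A) *
          ((e n (QuotientAddGroup.mk y) : ↥(𝒜 n)) : A))
    (hgradedNoeth : ∀ J : Ideal A, Ideal.IsHomogeneous 𝒜 J → J.FG) :
    IsNoetherianRing R := by
  classical
  rw [isNoetherianRing_iff_ideal_fg]
  intro I
  -- the symbol map
  set σ : ∀ n : ℕ, (F n) → A := fun n x => ((e n (QuotientAddGroup.mk x) : 𝒜 n) : A) with hσdef
  have hσ_mem : ∀ n (x : F n), σ n x ∈ 𝒜 n := fun n x => (e n (QuotientAddGroup.mk x)).2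
  have hσ_add : ∀ n (x y : F n), σ n (x + y) = σ n x + σ n y := by
    intro n x y
    simp only [hσdef]
    rw [show (QuotientAddGroup.mk (x + y) : _) =
        QuotientAddGroup.mk x + QuotientAddGroup.mk y from rfl, map_add]
    rfl
  have hσ_sub : ∀ n (x y : F n), σ n (x - y) = σ n x - σ n y := by
    intro n x y
    simp only [hσdef]
    rw [show (QuotientAddGroup.mk (x - y) : _) =
        QuotientAddGroup.mk x - QuotientAddGroup.mk y from rfl, map_sub]
    rfl
  have hσ_zero : ∀ n (x : F n), σ n x = 0 → (x : R) ∈ filtPrev F n := by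
    intro n x hx
    have h1 : e n (QuotientAddGroup.mk x) = 0 := by
      exact ZeroMemClass.coe_eq_zero.mp hx
    have h2 : (QuotientAddGroup.mk x :
        (F n) ⧸ (filtPrev F n).addSubgroupOf (F n)) = 0 := by
      exact (EmbeddingLike.map_eq_zero_iff).mp h1
    have h3 : x ∈ (filtPrev F n).addSubgroupOf (F n) :=
      (QuotientAddGroup.eq_zero_iff x).mp h2
    exact h3
  have hσ_surj : ∀ n (a : A), a ∈ 𝒜 n → ∃ x : F n, σ n x = a := by
    intro n a ha
    obtain ⟨q, hq⟩ := QuotientAddGroup.mk_surjective ((e n).symm ⟨a, ha⟩)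
    refine ⟨q, ?_⟩
    simp only [hσdef, hq, AddEquiv.apply_symm_apply]
  -- the set of symbols of elements of I
  set S : Set A := {a | ∃ n, ∃ x : F n, (x : R) ∈ I ∧ a = σ n x} with hSdef
  have hS_homog : ∀ a ∈ S, SetLike.IsHomogeneousElem 𝒜 a := by
    rintro a ⟨n, x, _, rfl⟩
    exact ⟨n, hσ_mem n x⟩
  obtain ⟨T, hT⟩ := hgradedNoeth (Ideal.span S) (Ideal.homogeneous_span 𝒜 S hS_homog)
  -- choose a finite subset `S'` of `S` spanning the same ideal
  have hT' : ∀ t : A, ∃ v : Finset A, ↑v ⊆ S ∧ (t ∈ T → t ∈ Ideal.span (v : Set A)) := by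
    intro t
    by_cases ht : t ∈ Ideal.span S
    · obtain ⟨v, hv1, hv2⟩ := Submodule.mem_span_finite_of_mem_span ht
      exact ⟨v, hv1, fun _ => hv2⟩
    · refine ⟨∅, by simp, fun htT => absurd ?_ ht⟩
      rw [← hT]
      exact Ideal.subset_span htT
  choose v hv1 hv2 using hT'
  set S' : Finset A := T.biUnion v with hS'def
  have hS'S : (S' : Set A) ⊆ S := by
    intro a ha
    simp only [hS'def, Finset.coe_biUnion, Set.mem_iUnion] at ha
    obtain ⟨t, _, hat⟩ := ha
    exact hv1 t hat
  have hspan' : Ideal.span (S' : Set A) = Ideal.span S := by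
    refine le_antisymm (Ideal.span_mono hS'S) ?_
    rw [← hT]
    rw [Ideal.span_le]
    intro t ht
    refine Ideal.span_mono ?_ (hv2 t ht)
    intro a ha
    simp only [hS'def, Finset.coe_biUnion, Set.mem_iUnion]
    exact ⟨t, ht, ha⟩
  -- choose preimages of the generators of `S'`
  have hget : ∀ s : A, s ∈ (S' : Set A) → ∃ n, ∃ x : F n, (x : R) ∈ I ∧ s = σ n x :=
    fun s hs => hS'S hs
  choose deg xfun hxI hxeq using hget
  set G : Finset R := S'.attach.image (fun s => ((xfun s.1 (Finset.mem_coe.mpr s.2)) : R))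
    with hGdef
  set J : Ideal R := Ideal.span (G : Set R) with hJdef
  have hGJ : ∀ s (h : s ∈ (S' : Set A)), ((xfun s h : F (deg s h)) : R) ∈ J := by
    intro s h
    refine Ideal.subset_span (Finset.mem_coe.mpr (Finset.mem_image.mpr
      ⟨⟨s, Finset.mem_coe.mp h⟩, Finset.mem_attach _ _, rfl⟩))
  have hJI : J ≤ I := by
    rw [hJdef, Ideal.span_le]
    intro r hr
    simp only [hGdef, Finset.coe_image, Set.mem_image, Finset.mem_coe, Finset.mem_attach] at hr
    obtain ⟨s, _, rfl⟩ := hr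
    exact hxI _ _
  -- the degree-n pieces reachable from J
  set W : ℕ → AddSubgroup A := fun n =>
    { carrier := {a | ∃ y : F n, (y : R) ∈ J ∧ a = σ n y}
      zero_mem' := ⟨0, by simpa using J.zero_mem, by
        simp only [hσdef]
        rw [show (QuotientAddGroup.mk (0 : F n) : _) = 0 from rfl, map_zero]
        rfl⟩
      add_mem' := by
        rintro a b ⟨y, hy, rfl⟩ ⟨z, hz, rfl⟩
        exact ⟨y + z, by simpa using add_mem hy hz, (hσ_add n y z).symm⟩
      neg_mem' := by
        rintro a ⟨y, hy, rfl⟩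
        refine ⟨-y, by simp only [AddSubgroup.coe_neg, NegMemClass.coe_neg]; exact neg_mem hy, ?_⟩
        have := hσ_sub n 0 y
        rw [zero_sub] at this
        rw [this]
        have h0 : σ n 0 = 0 := by
          simp only [hσdef]
          rw [show (QuotientAddGroup.mk (0 : F n) : _) = 0 from rfl, map_zero]; rfl
        rw [h0, zero_sub] } with hWdef
  -- homogeneous left multiplication preserves the W's
  have hhomogmul : ∀ (c : ℕ) (h : A), h ∈ 𝒜 c → ∀ b : A,
      (∀ n, (DirectSum.decompose 𝒜 b n : A) ∈ W n) →
      ∀ n, (DirectSum.decompose 𝒜 (h * b) n : A) ∈ W n := by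
    intro c h hh b hb n
    by_cases hcn : c ≤ n
    · obtain ⟨k, rfl⟩ := Nat.exists_eq_add_of_le hcn
      rw [DirectSum.coe_decompose_mul_of_left_mem_of_le 𝒜 hh hcn]
      have hk : c + k - c = k := by omega
      rw [hk]
      obtain ⟨y, hyJ, hy⟩ := hb k
      obtain ⟨r, hr⟩ := hσ_surj c h hh
      refine ⟨⟨(r : R) * (y : R), hF_mul c k r y r.2 y.2⟩,
        J.mul_mem_left _ hyJ, ?_⟩
      rw [hy, ← hr]
      exact (he_mul c k r y).symm
    · rw [DirectSum.coe_decompose_mul_of_left_mem_of_not_le 𝒜 hh hcn]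
      exact (W (n)).zero_mem
  -- key: every element of the span of S' has all components in the W's
  have key : ∀ b ∈ Ideal.span (S' : Set A), ∀ n, (DirectSum.decompose 𝒜 b n : A) ∈ W n := by
    intro b hb
    refine Submodule.span_induction ?_ ?_ ?_ ?_ hb
    · intro s hs n
      have hmem : s ∈ 𝒜 (deg s hs) := by
        have := hσ_mem (deg s hs) (xfun s hs)
        rwa [← hxeq s hs] at this
      by_cases hn : deg s hs = n
      · subst hn
        rw [DirectSum.decompose_of_mem_same 𝒜 hmem]
        exact ⟨xfun s hs, hGJ s hs, hxeq s hs⟩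
      · rw [DirectSum.decompose_of_mem_ne 𝒜 hmem hn]
        exact (W n).zero_mem
    · intro n
      rw [DirectSum.decompose_zero, DirectSum.zero_apply, ZeroMemClass.coe_zero]
      exact (W n).zero_mem
    · intro x y _ _ hx hy n
      rw [DirectSum.decompose_add, DirectSum.add_apply, AddMemClass.coe_add]
      exact (W n).add_mem (hx n) (hy n)
    · intro a x _ hx n
      rw [smul_eq_mul]
      have ha : a = ∑ i ∈ (DirectSum.decompose 𝒜 a).support,
          (DirectSum.decompose 𝒜 a i : A) := (DirectSum.sum_support_decompose 𝒜 a).symm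
      have h1 : a * x = ∑ i ∈ (DirectSum.decompose 𝒜 a).support,
          (DirectSum.decompose 𝒜 a i : A) * x := by
        rw [← Finset.sum_mul, ← ha]
      rw [h1, ← GradedRing.proj_apply, map_sum]
      refine AddSubgroup.sum_mem _ ?_
      intro i _
      rw [GradedRing.proj_apply]
      exact hhomogmul i _ (SetLike.coe_mem _) x hx n
  -- main induction: I ∩ F n ⊆ J
  have main : ∀ n, ∀ x : R, x ∈ F n → x ∈ I → x ∈ J := by
    intro n
    induction n with
    | zero =>
      intro x hx hxI'
      have hbS : σ 0 ⟨x, hx⟩ ∈ S := ⟨0, ⟨x, hx⟩, hxI', rfl⟩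
      have hb : σ 0 ⟨x, hx⟩ ∈ Ideal.span (S' : Set A) := by
        rw [hspan']; exact Ideal.subset_span hbS
      have := key _ hb 0
      rw [DirectSum.decompose_of_mem_same 𝒜 (hσ_mem 0 ⟨x, hx⟩)] at this
      obtain ⟨y, hyJ, hy⟩ := this
      have hz : σ 0 (⟨x, hx⟩ - y) = 0 := by rw [hσ_sub, ← hy, sub_self]
      have := hσ_zero 0 _ hz
      have hxy : x - (y : R) = 0 := by
        simpa [filtPrev] using this
      rw [sub_eq_zero.mp hxy]; exact hyJ
    | succ n ih =>
      intro x hx hxI'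
      have hbS : σ (n + 1) ⟨x, hx⟩ ∈ S := ⟨n + 1, ⟨x, hx⟩, hxI', rfl⟩
      have hb : σ (n + 1) ⟨x, hx⟩ ∈ Ideal.span (S' : Set A) := by
        rw [hspan']; exact Ideal.subset_span hbS
      have := key _ hb (n + 1)
      rw [DirectSum.decompose_of_mem_same 𝒜 (hσ_mem (n + 1) ⟨x, hx⟩)] at this
      obtain ⟨y, hyJ, hy⟩ := this
      have hz : σ (n + 1) (⟨x, hx⟩ - y) = 0 := by rw [hσ_sub, ← hy, sub_self]
      have hmem : x - (y : R) ∈ F n := hσ_zero (n + 1) _ hz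
      have hsub : x - (y : R) ∈ J := ih _ hmem (I.sub_mem hxI' (hJI hyJ))
      have : x = (x - (y : R)) + (y : R) := by abel
      rw [this]
      exact J.add_mem hsub hyJ
  have hIJ : I = J := by
    refine le_antisymm ?_ hJI
    intro x hx
    obtain ⟨n, hn⟩ := hF_exhaustive x
    exact main n x hn hx
  rw [hIJ]
  exact ⟨G, rfl⟩
end

section
/- The additive submonoid of ℕ^{n+2} consisting of tuples (a_1,…,a_n,r,m) with Σ_i a_i ν_i ≥ m and a_1 + ⋯ + a_n = r (for fixed natural numbers ν_1,…,ν_n) is generated by the finite set of elements (0,…,0,1,0,…,0,1,m) with the 1 in position i and 0 ≤ m ≤ ν_i. -/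
lemma aux_mem_closure (n : ℕ) (ν : Fin n → ℕ) :
    ∀ (r : ℕ) (a : Fin n → ℕ) (m : ℕ), ∑ i, a i = r → m ≤ ∑ i, a i * ν i →
    (a, r, m) ∈ AddSubmonoid.closure
        {p : (Fin n → ℕ) × ℕ × ℕ | ∃ i : Fin n, ∃ m : ℕ, m ≤ ν i ∧
          p = (Pi.single i 1, 1, m)} := by
  intro r
  induction r with
  | zero =>
    intro a m hr hm
    have ha : a = 0 := by
      funext j
      have := Finset.sum_eq_zero_iff.mp hr j (Finset.mem_univ j)
      simpa using this
    subst ha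
    simp at hm
    subst hm
    exact AddSubmonoid.zero_mem _
  | succ r ih =>
    intro a m hr hm
    have : ∃ i, a i ≠ 0 := by
      by_contra h
      push_neg at h
      simp [h] at hr
    obtain ⟨i, hi⟩ := this
    set a' := Function.update a i (a i - 1) with ha'
    have hsplit : a = a' + Pi.single i 1 := by
      funext j
      by_cases hj : j = i
      · subst hj; simp [ha', Function.update_self, Pi.single_eq_same]; omega
      · simp [ha', Function.update_of_ne hj, Pi.single_eq_of_ne hj]
    have hsum1 : ∑ j, a j = (∑ j, a' j) + 1 := by
      rw [hsplit]
      simp [Finset.sum_add_distrib, Finset.sum_pi_single]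
    have hsum2 : ∑ j, a j * ν j = (∑ j, a' j * ν j) + ν i := by
      rw [hsplit]
      simp only [Pi.add_apply, add_mul]
      rw [Finset.sum_add_distrib]
      congr 1
      rw [Finset.sum_eq_single i]
      · simp
      · intro b _ hb; simp [Pi.single_eq_of_ne hb]
      · simp
    have key : (a, r + 1, m) =
        (a', r, m - min m (ν i)) + (Pi.single i 1, 1, min m (ν i)) := by
      refine Prod.ext ?_ (Prod.ext ?_ ?_)
      · simpa using hsplit
      · simp
      · simp
    rw [key]
    refine AddSubmonoid.add_mem _ ?_ ?_
    · exact ih a' _ (by omega) (by omega)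
    · exact AddSubmonoid.subset_closure ⟨i, min m (ν i), min_le_right _ _, rfl⟩

/-- For fixed natural numbers `ν 1, …, ν n`, the additive submonoid of
`ℕ^{n+2}` of tuples `(a, r, m)` with `∑ i, a i * ν i ≥ m` and `∑ i, a i = r`
is generated by the elements `(single i 1, 1, m)` for `1 ≤ i ≤ n` and `0 ≤ m ≤ ν i`. -/
theorem monoid_generated_by_basic_elements (n : ℕ) (ν : Fin n → ℕ) :
    (AddSubmonoid.closure
        {p : (Fin n → ℕ) × ℕ × ℕ | ∃ i : Fin n, ∃ m : ℕ, m ≤ ν i ∧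
          p = (Pi.single i 1, 1, m)} : Set ((Fin n → ℕ) × ℕ × ℕ)) =
      {p : (Fin n → ℕ) × ℕ × ℕ | p.2.2 ≤ ∑ i, p.1 i * ν i ∧ ∑ i, p.1 i = p.2.1} := by
  ext p
  constructor
  · intro hp
    induction hp using AddSubmonoid.closure_induction with
    | mem x hx =>
      obtain ⟨i, m, hm, rfl⟩ := hx
      constructor
      · simp only
        rw [Finset.sum_eq_single i]
        · simpa using hm
        · intro b _ hb; simp [Pi.single_eq_of_ne hb]
        · simp
      · simp [Finset.sum_pi_single]
    | zero => simp
    | add x y _ _ hx hy =>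
      obtain ⟨hx1, hx2⟩ := hx
      obtain ⟨hy1, hy2⟩ := hy
      constructor
      · simp only [Prod.snd_add, Prod.fst_add, Pi.add_apply, add_mul,
          Finset.sum_add_distrib]
        omega
      · simp only [Prod.snd_add, Prod.fst_add, Pi.add_apply, Finset.sum_add_distrib]
        omega
  · rintro ⟨h1, h2⟩
    obtain ⟨a, r, m⟩ := p
    exact aux_mem_closure n ν r a m h2 h1
end
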